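/- For τ ∈ ℝ and finitely supported v, w : ℤ → ℂ with v_0 = 0 and w_0 = 0, let R_τ(v, w) denote the relation: for every k ∈ ℤ, w_k = e^{−iτk³} v_k + (1/24) Σ_{k₁+k₂=k, k₁≠0, k₂≠0} ((e^{−iτk₁³} v_{k₁} + w_{k₁})/(i k₁)) · ((e^{−iτk₂³} v_{k₂} + w_{k₂})/(i k₂)) − (1/24) e^{−iτk³} Σ_{k₁+k₂=k, k₁≠0, k₂≠0} ((v_{k₁} + e^{iτk₁³} w_{k₁})/(i k₁)) · ((v_{k₂} + e^{iτk₂³} w_{k₂})/(i k₂)). Then R is symmetric: for all τ ∈ ℝ and all such v, w, R_τ(v, w) holds if and only if R_{−τ}(w, v) holds. -/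
import Mathlib


/-- One step of the first-order resonance-based midpoint scheme for the Korteweg–de
Vries equation on `𝕋`, in Fourier coordinates: `kdvMidR τ v w` holds iff for every
`k ∈ ℤ`,
`w_k = e^{-iτk³} v_k
  + (1/24) Σ_{k₁+k₂=k, k₁≠0, k₂≠0} ((e^{-iτk₁³} v_{k₁} + w_{k₁})/(ik₁)) ((e^{-iτk₂³} v_{k₂} + w_{k₂})/(ik₂))
  - (1/24) e^{-iτk³} Σ_{k₁+k₂=k, k₁≠0, k₂≠0} ((v_{k₁} + e^{iτk₁³} w_{k₁})/(ik₁)) ((v_{k₂} + e^{iτk₂³} w_{k₂})/(ik₂))`,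
where the convolution constraint `k₁+k₂ = k` has been solved as `k₂ = k - k₁`. -/
noncomputable def kdvMidR (τ : ℝ) (v w : ℤ →₀ ℂ) : Prop :=
  ∀ k : ℤ,
    w k = Complex.exp (-(Complex.I * (τ : ℂ) * (k : ℂ) ^ 3)) * v k
      + (1 / 24 : ℂ) *
          (∑ᶠ k₁ : ℤ, if k₁ ≠ 0 ∧ k - k₁ ≠ 0 then
            ((Complex.exp (-(Complex.I * (τ : ℂ) * (k₁ : ℂ) ^ 3)) * v k₁ + w k₁) /
                (Complex.I * (k₁ : ℂ))) *
              ((Complex.exp (-(Complex.I * (τ : ℂ) * ((k - k₁ : ℤ) : ℂ) ^ 3)) * v (k - k₁) +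
                  w (k - k₁)) / (Complex.I * ((k - k₁ : ℤ) : ℂ)))
            else 0)
      - (1 / 24 : ℂ) * Complex.exp (-(Complex.I * (τ : ℂ) * (k : ℂ) ^ 3)) *
          (∑ᶠ k₁ : ℤ, if k₁ ≠ 0 ∧ k - k₁ ≠ 0 then
            ((v k₁ + Complex.exp (Complex.I * (τ : ℂ) * (k₁ : ℂ) ^ 3) * w k₁) /
                (Complex.I * (k₁ : ℂ))) *
              ((v (k - k₁) +
                  Complex.exp (Complex.I * (τ : ℂ) * ((k - k₁ : ℤ) : ℂ) ^ 3) * w (k - k₁)) /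
                (Complex.I * ((k - k₁ : ℤ) : ℂ)))
            else 0)


private lemma kdv_flip (E E' c s t a b : ℂ) (hE : E * E' = 1) :
    a = E * b + c * s - c * E * t ↔ b = E' * a + c * t - c * E' * s := by
  constructor <;> intro h
  · linear_combination (-E') * h + (c * t - b) * hE
  · linear_combination (-E) * h + (c * s - a) * hE

/-- The one-step relation of the first-order resonance-based midpoint KdV scheme is
symmetric on zero-mean data: `R_τ(v, w)` holds iff `R_{-τ}(w, v)` holds. -/
theorem kdvMidR_symmetric (τ : ℝ) (v w : ℤ →₀ ℂ) (hv : v 0 = 0) (hw : w 0 = 0) :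
    kdvMidR τ v w ↔ kdvMidR (-τ) w v := by
  unfold kdvMidR
  refine forall_congr' fun k => ?_
  simp only [Complex.ofReal_neg, mul_neg, neg_mul, neg_neg]
  have hE : Complex.exp (-(Complex.I * (τ : ℂ) * (k : ℂ) ^ 3)) *
      Complex.exp (Complex.I * (τ : ℂ) * (k : ℂ) ^ 3) = 1 := by
    rw [← Complex.exp_add, neg_add_cancel, Complex.exp_zero]
  have h1 : (∑ᶠ k₁ : ℤ, if k₁ ≠ 0 ∧ k - k₁ ≠ 0 then
        ((Complex.exp (Complex.I * (τ : ℂ) * (k₁ : ℂ) ^ 3) * w k₁ + v k₁) /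
            (Complex.I * (k₁ : ℂ))) *
          ((Complex.exp (Complex.I * (τ : ℂ) * ((k - k₁ : ℤ) : ℂ) ^ 3) * w (k - k₁) +
              v (k - k₁)) / (Complex.I * ((k - k₁ : ℤ) : ℂ)))
        else 0) =
      (∑ᶠ k₁ : ℤ, if k₁ ≠ 0 ∧ k - k₁ ≠ 0 then
        ((v k₁ + Complex.exp (Complex.I * (τ : ℂ) * (k₁ : ℂ) ^ 3) * w k₁) /
            (Complex.I * (k₁ : ℂ))) *
          ((v (k - k₁) +
              Complex.exp (Complex.I * (τ : ℂ) * ((k - k₁ : ℤ) : ℂ) ^ 3) * w (k - k₁)) /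
            (Complex.I * ((k - k₁ : ℤ) : ℂ)))
        else 0) :=
    finsum_congr fun k₁ => by split_ifs with hk <;> ring
  have h2 : (∑ᶠ k₁ : ℤ, if k₁ ≠ 0 ∧ k - k₁ ≠ 0 then
        ((w k₁ + Complex.exp (-(Complex.I * (τ : ℂ) * (k₁ : ℂ) ^ 3)) * v k₁) /
            (Complex.I * (k₁ : ℂ))) *
          ((w (k - k₁) +
              Complex.exp (-(Complex.I * (τ : ℂ) * ((k - k₁ : ℤ) : ℂ) ^ 3)) * v (k - k₁)) /
            (Complex.I * ((k - k₁ : ℤ) : ℂ)))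
        else 0) =
      (∑ᶠ k₁ : ℤ, if k₁ ≠ 0 ∧ k - k₁ ≠ 0 then
        ((Complex.exp (-(Complex.I * (τ : ℂ) * (k₁ : ℂ) ^ 3)) * v k₁ + w k₁) /
            (Complex.I * (k₁ : ℂ))) *
          ((Complex.exp (-(Complex.I * (τ : ℂ) * ((k - k₁ : ℤ) : ℂ) ^ 3)) * v (k - k₁) +
              w (k - k₁)) / (Complex.I * ((k - k₁ : ℤ) : ℂ)))
        else 0) :=
    finsum_congr fun k₁ => by split_ifs with hk <;> ring
  rw [h1, h2]
  exact kdv_flip _ _ _ _ _ _ _ hE
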